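/- Let G be a multi r-edge-colored complete graph (transitive coloring) in which every edge has either exactly 1 or exactly r colors. If C_1, ..., C_r are monochromatic components of colors 1, ..., r respectively with C_1 ∩ ... ∩ C_r ≠ ∅, then for every pair of distinct indices i, j we have C_i ∩ C_j = C_1 ∩ ... ∩ C_r. -/
import Mathlib


/-- In a multi r-edge-colored complete graph where every edge has
exactly 1 or exactly r colors, if monochromatic components C i of color i
(i = 1,…,r) have a common point, then any two of them intersect exactly in the
common intersection of all of them. -/
theorem stmt_18 {V : Type*} [Fintype V] [DecidableEq V] (r : ℕ)
    (col : V → V → Finset (Fin r))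
    (hsymm : ∀ u v : V, col u v = col v u)
    (htrans : ∀ u v w : V, ∀ i : Fin r,
      i ∈ col u v → i ∈ col v w → u ≠ w → i ∈ col u w)
    (hcols : ∀ u v : V, u ≠ v → (col u v).card = 1 ∨ (col u v).card = r)
    (C : Fin r → Set V)
    (hC : ∀ i : Fin r, ∃ v : V, C i = {u : V | u = v ∨ i ∈ col u v})
    (hinter : (⋂ i : Fin r, C i).Nonempty) :
    ∀ i j : Fin r, i ≠ j → C i ∩ C j = ⋂ i : Fin r, C i := by
  obtain ⟨x, hx⟩ := hinter
  have hx' : ∀ i, x ∈ C i := fun i => Set.mem_iInter.mp hx i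
  have key : ∀ (i : Fin r) (u : V), u ∈ C i ↔ (u = x ∨ i ∈ col u x) := by
    intro i u
    obtain ⟨v, hv⟩ := hC i
    have hxv : x = v ∨ i ∈ col x v := by
      have := hx' i; rw [hv] at this; exact this
    rw [hv]
    simp only [Set.mem_setOf_eq]
    constructor
    · rintro (rfl | h)
      · rcases hxv with rfl | hxv
        · exact Or.inl rfl
        · exact Or.inr (by rw [hsymm]; exact hxv)
      · rcases hxv with rfl | hxv
        · exact Or.inr h
        · by_cases hux : u = x
          · exact Or.inl hux
          · exact Or.inr (htrans u v x i h (by rw [hsymm]; exact hxv) hux)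
    · rintro (rfl | h)
      · exact hxv
      · rcases hxv with rfl | hxv
        · exact Or.inr h
        · by_cases huv : u = v
          · exact Or.inl huv
          · exact Or.inr (htrans u x v i h hxv huv)
  intro i j hij
  apply Set.Subset.antisymm
  · rintro u ⟨hui, huj⟩
    by_cases hux : u = x
    · subst hux; exact hx
    · rw [key i u] at hui; rw [key j u] at huj
      have hi : i ∈ col u x := hui.resolve_left hux
      have hj : j ∈ col u x := huj.resolve_left hux
      have hsub : ({i, j} : Finset (Fin r)) ⊆ col u x := by
        intro k hk
        rcases Finset.mem_insert.mp hk with rfl | hk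
        · exact hi
        · rw [Finset.mem_singleton.mp hk]; exact hj
      have h2 : 2 ≤ (col u x).card := by
        have hcard : ({i, j} : Finset (Fin r)).card = 2 := by
          rw [Finset.card_insert_of_notMem (by simpa using hij), Finset.card_singleton]
        rw [← hcard]; exact Finset.card_le_card hsub
      rcases hcols u x hux with h1 | hr
      · omega
      · have huniv : col u x = Finset.univ :=
          Finset.eq_univ_of_card _ (by simpa using hr)
        rw [Set.mem_iInter]
        intro k
        rw [key k u]
        exact Or.inr (huniv ▸ Finset.mem_univ k)
  · intro u hu
    exact ⟨Set.mem_iInter.mp hu i, Set.mem_iInter.mp hu j⟩
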